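/- Let R be an associative ring with identity and let a, b, c, d ∈ R satisfy (ac)² = (db)(ac), (db)² = (ac)(db), b(ac)a = b(db)a, and c(ac)d = c(db)d. Then ac has a Drazin inverse if and only if bd has a Drazin inverse. Moreover, if e is a Drazin inverse of ac with (ac)^k = (ac)^{k+1}·e for some natural number k ≥ 1, then b·e²·d is a Drazin inverse of bd satisfying (bd)^{k+2} = (bd)^{k+3}·(b·e²·d); in particular the Drazin index of bd is at most the Drazin index of ac plus 2. -/

import Mathlib

/-- `e` is a Drazin inverse of `a`:  `e = e * a * e`, `e` doubly commutes with `a`,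
and `a ^ k = a ^ (k + 1) * e` for some `k ≥ 1`. -/
def IsDrazinInverse {R : Type*} [Ring R] (a e : R) : Prop :=
  e = e * a * e ∧ (∀ y : R, y * a = a * y → e * y = y * e) ∧
    ∃ k : ℕ, 1 ≤ k ∧ a ^ k = a ^ (k + 1) * e

theorem idem_pow {R : Type*} [Monoid R] (p : R) (hpp : p * p = p) :
    ∀ m : ℕ, 1 ≤ m → p ^ m = p := by
  intro m hm
  induction m with
  | zero => omega
  | succ n ih =>
    rcases Nat.eq_or_lt_of_le hm with h | h
    · simp [← h]
    · rw [pow_succ, ih (by omega), hpp]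

/-- The key forward computation. -/

theorem drazin_of_commute {R : Type*} [Ring R] (x f : R) (m : ℕ) (hm : 1 ≤ m)
    (hc : f * x = x * f) (hff : f = f * x * f) (hpow : x ^ m = x ^ (m + 1) * f) :
    IsDrazinInverse x f := by
  have hCxf : Commute x f := hc.symm
  have hfx2 : f = x * (f * f) := by
    calc f = f * x * f := hff
    _ = x * f * f := by rw [hc]
    _ = x * (f * f) := by rw [mul_assoc]
  obtain ⟨p, hp⟩ : ∃ p, p = x * f := ⟨_, rfl⟩
  have hpp : p * p = p := by
    calc p * p = (x * f) * (x * f) := by rw [hp]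
    _ = x * (f * x * f) := by noncomm_ring
    _ = x * f := by rw [← hff]
    _ = p := hp.symm
  have hpx : p * x = x * p := by
    calc p * x = x * f * x := by rw [hp]
    _ = x * (f * x) := by rw [mul_assoc]
    _ = x * (x * f) := by rw [hc]
    _ = x * p := by rw [← hp]
  have hfp : f * p = f := by
    calc f * p = f * (x * f) := by rw [hp]
    _ = f * x * f := by rw [mul_assoc]
    _ = f := hff.symm
  have hpf : p * f = f := by
    calc p * f = x * f * f := by rw [hp]
    _ = x * (f * f) := by rw [mul_assoc]
    _ = f := hfx2.symm
  have hCpx : Commute p x := hpx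
  have hxmp : x ^ m * p = x ^ m := by
    calc x ^ m * p = x ^ m * (x * f) := by rw [hp]
    _ = x ^ m * x * f := by rw [mul_assoc]
    _ = x ^ (m + 1) * f := by rw [← pow_succ]
    _ = x ^ m := hpow.symm
  have hpxm : p * x ^ m = x ^ m := by
    rw [(hCpx.pow_right m).eq, hxmp]
  have hfmxm : f ^ m * x ^ m = p := by
    have h1 : (f * x) ^ m = f ^ m * x ^ m := (hCxf.symm).mul_pow m
    rw [← h1, hc, ← hp]
    exact idem_pow p hpp m hm
  have hxmfm : x ^ m * f ^ m = p := by
    have h1 : (x * f) ^ m = x ^ m * f ^ m := hCxf.mul_pow m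
    rw [← h1, ← hp]
    exact idem_pow p hpp m hm
  refine ⟨hff, ?_, ⟨m, hm, hpow⟩⟩
  intro y hy
  have hyxm : y * x ^ m = x ^ m * y := ((show Commute y x from hy).pow_right m).eq
  have hpy : p * y = p * y * p := by
    calc p * y = f ^ m * x ^ m * y := by rw [hfmxm]
    _ = f ^ m * (x ^ m * y) := by rw [mul_assoc]
    _ = f ^ m * (y * x ^ m) := by rw [hyxm]
    _ = f ^ m * (y * (x ^ m * p)) := by rw [hxmp]
    _ = f ^ m * (y * x ^ m * p) := by rw [mul_assoc y]
    _ = f ^ m * (x ^ m * y * p) := by rw [hyxm]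
    _ = f ^ m * x ^ m * (y * p) := by noncomm_ring
    _ = p * (y * p) := by rw [hfmxm]
    _ = p * y * p := by rw [mul_assoc]
  have hyp : y * p = p * y * p := by
    calc y * p = y * (x ^ m * f ^ m) := by rw [hxmfm]
    _ = y * x ^ m * f ^ m := by rw [mul_assoc]
    _ = x ^ m * y * f ^ m := by rw [hyxm]
    _ = p * x ^ m * y * f ^ m := by rw [hpxm]
    _ = p * (x ^ m * y) * f ^ m := by rw [mul_assoc p]
    _ = p * (y * x ^ m) * f ^ m := by rw [hyxm]
    _ = p * y * (x ^ m * f ^ m) := by noncomm_ring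
    _ = p * y * p := by rw [hxmfm]
  have hpyc : p * y = y * p := hpy.trans hyp.symm
  have hfq : f * (p * y) = p * y * f := by
    calc f * (p * y) = f * (p * y * p) := by rw [← hpy]
    _ = f * (p * y * (x * f)) := by rw [← hp]
    _ = f * (p * y * x) * f := by noncomm_ring
    _ = f * (p * (y * x)) * f := by rw [mul_assoc p y x]
    _ = f * (p * (x * y)) * f := by rw [hy]
    _ = f * (p * x * y) * f := by rw [mul_assoc p x y]
    _ = f * (x * p * y) * f := by rw [hpx]
    _ = (f * x) * (p * y) * f := by noncomm_ring
    _ = (x * f) * (p * y) * f := by rw [hc]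
    _ = p * (p * y) * f := by rw [← hp]
    _ = p * p * y * f := by noncomm_ring
    _ = p * y * f := by rw [hpp]
  calc f * y = f * p * y := by rw [hfp]
  _ = f * (p * y) := by rw [mul_assoc]
  _ = p * y * f := hfq
  _ = y * p * f := by rw [hpyc]
  _ = y * (p * f) := by rw [mul_assoc]
  _ = y * f := by rw [hpf]

/-- Cline formula. -/
theorem cline {R : Type*} [Ring R] (x y g : R) (hg : IsDrazinInverse (x * y) g) :
    IsDrazinInverse (y * x) (y * g ^ 2 * x) := by
  obtain ⟨hg1, hgcomm, m, hm, hgm⟩ := hg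
  have hgc : g * (x * y) = (x * y) * g := hgcomm (x * y) rfl
  have hgg : (x * y) * (g * g) = g := by
    calc (x * y) * (g * g) = (x * y) * g * g := by noncomm_ring
    _ = g * (x * y) * g := by rw [hgc]
    _ = g := hg1.symm
  have hgg' : (g * g) * (x * y) = g := by
    calc g * g * (x * y) = g * (g * (x * y)) := by noncomm_ring
    _ = g * ((x * y) * g) := by rw [hgc]
    _ = g * (x * y) * g := by noncomm_ring
    _ = g := hg1.symm
  have hswap : (g * g) * (x * y) = (x * y) * (g * g) := hgg'.trans hgg.symm
  have hupow : ∀ n : ℕ, (y * x) ^ (n + 1) = y * (x * y) ^ n * x := by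
    intro n
    induction n with
    | zero => simp
    | succ n ih =>
      calc (y * x) ^ (n + 2) = (y * x) ^ (n + 1) * (y * x) := by rw [pow_succ]
      _ = y * (x * y) ^ n * x * (y * x) := by rw [ih]
      _ = y * ((x * y) ^ n * (x * y)) * x := by noncomm_ring
      _ = y * (x * y) ^ (n + 1) * x := by rw [← pow_succ]
  have e1 : (y * g ^ 2 * x) * (y * x) = (y * x) * (y * g ^ 2 * x) := by
    calc (y * g ^ 2 * x) * (y * x) = y * ((g * g) * (x * y)) * x := by
          rw [pow_two]; noncomm_ring
    _ = y * ((x * y) * (g * g)) * x := by rw [hswap]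
    _ = (y * x) * (y * g ^ 2 * x) := by rw [pow_two]; noncomm_ring
  have e2 : (y * g ^ 2 * x) * (y * x) * (y * g ^ 2 * x) = y * g ^ 2 * x := by
    calc (y * g ^ 2 * x) * (y * x) * (y * g ^ 2 * x)
        = y * (g * g * (x * y)) * ((x * y) * (g * g)) * x := by
          rw [pow_two]; noncomm_ring
    _ = y * g * g * x := by rw [hgg', hgg]
    _ = y * g ^ 2 * x := by rw [pow_two]; noncomm_ring
  have e3 : (y * x) ^ (m + 1 + 1) * (y * g ^ 2 * x) = (y * x) ^ (m + 1) := by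
    calc (y * x) ^ (m + 1 + 1) * (y * g ^ 2 * x)
        = y * (x * y) ^ (m + 1) * x * (y * g ^ 2 * x) := by rw [hupow (m + 1)]
    _ = y * ((x * y) ^ (m + 1) * ((x * y) * (g * g))) * x := by
          rw [pow_two]; noncomm_ring
    _ = y * ((x * y) ^ (m + 1) * g) * x := by rw [hgg]
    _ = y * (x * y) ^ m * x := by rw [← hgm]
    _ = (y * x) ^ (m + 1) := (hupow m).symm
  exact drazin_of_commute _ _ (m + 1) (by omega) e1 e2.symm e3.symm

theorem fwd_eqs {R : Type*} [Ring R] (a b c d : R)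
    (h1 : (a * c) ^ 2 = (d * b) * (a * c))
    (h2 : (d * b) ^ 2 = (a * c) * (d * b))
    (h4 : c * (a * c) * d = c * (d * b) * d)
    (e : R) (k : ℕ) (hk : 1 ≤ k)
    (he1 : e = e * (a * c) * e)
    (hec : e * (a * c) = (a * c) * e)
    (hek : (a * c) ^ k = (a * c) ^ (k + 1) * e) :
    ((b * e ^ 2 * d) * (b * d) = (b * d) * (b * e ^ 2 * d)) ∧
    (b * e ^ 2 * d = (b * e ^ 2 * d) * (b * d) * (b * e ^ 2 * d)) ∧
    ((b * d) ^ (k + 2) = (b * d) ^ (k + 3) * (b * e ^ 2 * d)) := by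
  obtain ⟨k', rfl⟩ : ∃ k', k = k' + 1 := ⟨k - 1, by omega⟩
  have hCe : Commute (a * c) e := hec.symm
  have he2 : (a * c) * (e * e) = e := by
    have : e = (a * c) * (e * e) := by
      calc e = e * (a * c) * e := he1
      _ = (a * c) * e * e := by rw [hec]
      _ = (a * c) * (e * e) := by noncomm_ring
    exact this.symm
  have hAeI : ((a * c) * e) * ((a * c) * e) = (a * c) * e := by
    calc ((a * c) * e) * ((a * c) * e) = (a * c) * (e * (a * c)) * e := by noncomm_ring
    _ = (a * c) * ((a * c) * e) * e := by rw [hec]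
    _ = (a * c) * ((a * c) * (e * e)) := by noncomm_ring
    _ = (a * c) * e := by rw [he2]
  have hAj : ∀ j : ℕ, 1 ≤ j → (a * c) ^ j * e ^ j = (a * c) * e := by
    intro j hj
    rw [← hCe.mul_pow j]
    exact idem_pow _ hAeI j hj
  have hej : ∀ j : ℕ, e = (a * c) ^ j * e ^ (j + 1) := by
    intro j
    induction j with
    | zero => simp
    | succ j ih =>
      calc e = (a * c) ^ j * e ^ (j + 1) := ih
      _ = (a * c) ^ j * (e * e ^ j) := by rw [pow_succ']
      _ = (a * c) ^ j * ((a * c) * (e * e) * e ^ j) := by rw [he2]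
      _ = ((a * c) ^ j * (a * c)) * (e * (e * e ^ j)) := by noncomm_ring
      _ = (a * c) ^ (j + 1) * e ^ (j + 2) := by
        rw [← pow_succ, ← pow_succ' e j, ← pow_succ' e (j + 1)]
  have hAem : ∀ j : ℕ, 1 ≤ j → (a * c) ^ j * e ^ (j + 1) = e := by
    intro j hj
    calc (a * c) ^ j * e ^ (j + 1) = (a * c) ^ j * (e ^ j * e) := by rw [pow_succ]
    _ = ((a * c) ^ j * e ^ j) * e := by noncomm_ring
    _ = ((a * c) * e) * e := by rw [hAj j hj]
    _ = (a * c) * (e * e) := by noncomm_ring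
    _ = e := he2
  have he2pow : e * e = (a * c) ^ (k' + 1) * e ^ (k' + 3) := by
    have h := congrArg (fun t => t * e) (hej (k' + 1))
    calc e * e = (a * c) ^ (k' + 1) * e ^ (k' + 2) * e := h
    _ = (a * c) ^ (k' + 1) * (e ^ (k' + 2) * e) := by noncomm_ring
    _ = (a * c) ^ (k' + 1) * e ^ (k' + 3) := by rw [← pow_succ]
  have he2pow' : e * e = e ^ (k' + 3) * (a * c) ^ (k' + 1) :=
    he2pow.trans ((hCe.pow_pow (k' + 1) (k' + 3)).eq)
  have hBA : ∀ j : ℕ, (d * b) * (a * c) ^ (j + 1) = (a * c) ^ (j + 2) := by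
    intro j
    induction j with
    | zero => rw [pow_one]; exact h1.symm
    | succ j ih =>
      calc (d * b) * (a * c) ^ (j + 2) = (d * b) * ((a * c) ^ (j + 1) * (a * c)) := by
            rw [← pow_succ]
      _ = ((d * b) * (a * c) ^ (j + 1)) * (a * c) := by noncomm_ring
      _ = (a * c) ^ (j + 2) * (a * c) := by rw [ih]
      _ = (a * c) ^ (j + 3) := by rw [← pow_succ]
  have hK1 : (d * b) * (e * e) = (a * c) * (e * e) := by
    calc (d * b) * (e * e) = (d * b) * ((a * c) ^ (k' + 1) * e ^ (k' + 3)) := by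
          rw [he2pow]
    _ = ((d * b) * (a * c) ^ (k' + 1)) * e ^ (k' + 3) := by noncomm_ring
    _ = (a * c) ^ (k' + 2) * e ^ (k' + 3) := by rw [hBA k']
    _ = e := hAem (k' + 2) (by omega)
    _ = (a * c) * (e * e) := he2.symm
  have hABd : (a * c) * ((d * b) * d) = (a * c) * ((a * c) * d) := by
    calc (a * c) * ((d * b) * d) = a * (c * (d * b) * d) := by noncomm_ring
    _ = a * (c * (a * c) * d) := by rw [← h4]
    _ = (a * c) * ((a * c) * d) := by noncomm_ring
  have hAjBd : ∀ j : ℕ, (a * c) ^ (j + 1) * ((d * b) * d) = (a * c) ^ (j + 2) * d := by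
    intro j
    induction j with
    | zero =>
      rw [pow_one, pow_two, hABd]; noncomm_ring
    | succ j ih =>
      calc (a * c) ^ (j + 2) * ((d * b) * d)
          = ((a * c) * (a * c) ^ (j + 1)) * ((d * b) * d) := by rw [← pow_succ']
      _ = (a * c) * ((a * c) ^ (j + 1) * ((d * b) * d)) := by noncomm_ring
      _ = (a * c) * ((a * c) ^ (j + 2) * d) := by rw [ih]
      _ = ((a * c) * (a * c) ^ (j + 2)) * d := by noncomm_ring
      _ = (a * c) ^ (j + 3) * d := by rw [← pow_succ']
  have hBpow : ∀ j : ℕ, (d * b) ^ (j + 1) = (a * c) ^ j * (d * b) := by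
    intro j
    induction j with
    | zero => simp
    | succ j ih =>
      calc (d * b) ^ (j + 2) = (d * b) ^ (j + 1) * (d * b) := by rw [pow_succ]
      _ = ((a * c) ^ j * (d * b)) * (d * b) := by rw [ih]
      _ = (a * c) ^ j * ((d * b) * (d * b)) := by noncomm_ring
      _ = (a * c) ^ j * (d * b) ^ 2 := by rw [pow_two]
      _ = (a * c) ^ j * ((a * c) * (d * b)) := by rw [h2]
      _ = ((a * c) ^ j * (a * c)) * (d * b) := by noncomm_ring
      _ = (a * c) ^ (j + 1) * (d * b) := by rw [← pow_succ]
  have hxpow : ∀ n : ℕ, (b * d) ^ (n + 1) = b * ((d * b) ^ n * d) := by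
    intro n
    induction n with
    | zero => simp
    | succ n ih =>
      calc (b * d) ^ (n + 2) = (b * d) ^ (n + 1) * (b * d) := by rw [pow_succ]
      _ = (b * ((d * b) ^ n * d)) * (b * d) := by rw [ih]
      _ = b * (((d * b) ^ n * (d * b)) * d) := by noncomm_ring
      _ = b * ((d * b) ^ (n + 1) * d) := by rw [← pow_succ]
  -- f * x = b * (e * d)
  have ee1l : (b * e ^ 2 * d) * (b * d) = b * (e * d) := by
    calc (b * e ^ 2 * d) * (b * d) = b * ((e * e) * ((d * b) * d)) := by
          rw [pow_two]; noncomm_ring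
    _ = b * ((e ^ (k' + 3) * (a * c) ^ (k' + 1)) * ((d * b) * d)) := by rw [← he2pow']
    _ = b * (e ^ (k' + 3) * ((a * c) ^ (k' + 1) * ((d * b) * d))) := by noncomm_ring
    _ = b * (e ^ (k' + 3) * ((a * c) ^ (k' + 2) * d)) := by rw [hAjBd k']
    _ = b * ((e ^ (k' + 3) * (a * c) ^ (k' + 2)) * d) := by noncomm_ring
    _ = b * (((a * c) ^ (k' + 2) * e ^ (k' + 3)) * d) := by
          rw [(hCe.pow_pow (k' + 2) (k' + 3)).eq]
    _ = b * (e * d) := by rw [hAem (k' + 2) (by omega)]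
  -- x * f = b * (e * d)
  have ee1r : (b * d) * (b * e ^ 2 * d) = b * (e * d) := by
    calc (b * d) * (b * e ^ 2 * d) = b * (((d * b) * (e * e)) * d) := by
          rw [pow_two]; noncomm_ring
    _ = b * (((a * c) * (e * e)) * d) := by rw [hK1]
    _ = b * (e * d) := by rw [he2]
  refine ⟨ee1l.trans ee1r.symm, ?_, ?_⟩
  · have e2 : (b * e ^ 2 * d) * (b * d) * (b * e ^ 2 * d) = b * e ^ 2 * d := by
      calc (b * e ^ 2 * d) * (b * d) * (b * e ^ 2 * d)
          = (b * (e * d)) * (b * e ^ 2 * d) := by rw [ee1l]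
      _ = b * ((e * ((d * b) * (e * e))) * d) := by rw [pow_two]; noncomm_ring
      _ = b * ((e * ((a * c) * (e * e))) * d) := by rw [hK1]
      _ = b * ((e * e) * d) := by rw [he2]
      _ = b * e ^ 2 * d := by rw [pow_two]; noncomm_ring
    exact e2.symm
  · have lhs : (b * d) ^ (k' + 3) = b * ((a * c) ^ (k' + 2) * d) := by
      calc (b * d) ^ (k' + 3) = b * ((d * b) ^ (k' + 2) * d) := hxpow (k' + 2)
      _ = b * (((a * c) ^ (k' + 1) * (d * b)) * d) := by rw [hBpow (k' + 1)]
      _ = b * ((a * c) ^ (k' + 1) * ((d * b) * d)) := by noncomm_ring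
      _ = b * ((a * c) ^ (k' + 2) * d) := by rw [hAjBd k']
    have hek2 : (a * c) ^ (k' + 2) * e = (a * c) ^ (k' + 1) := hek.symm
    have hek3 : (a * c) ^ (k' + 3) * e = (a * c) ^ (k' + 2) := by
      calc (a * c) ^ (k' + 3) * e = ((a * c) * (a * c) ^ (k' + 2)) * e := by
            rw [← pow_succ']
      _ = (a * c) * ((a * c) ^ (k' + 2) * e) := by noncomm_ring
      _ = (a * c) * (a * c) ^ (k' + 1) := by rw [hek2]
      _ = (a * c) ^ (k' + 2) := by rw [← pow_succ']
    have rhs : (b * d) ^ (k' + 4) * (b * e ^ 2 * d) = b * ((a * c) ^ (k' + 2) * d) := by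
      calc (b * d) ^ (k' + 4) * (b * e ^ 2 * d)
          = (b * ((d * b) ^ (k' + 3) * d)) * (b * (e * e) * d) := by
            rw [hxpow (k' + 3), pow_two]
      _ = b * ((((d * b) ^ (k' + 3) * (d * b)) * (e * e)) * d) := by noncomm_ring
      _ = b * (((d * b) ^ (k' + 4) * (e * e)) * d) := by rw [← pow_succ]
      _ = b * ((((a * c) ^ (k' + 3) * (d * b)) * (e * e)) * d) := by rw [hBpow (k' + 3)]
      _ = b * (((a * c) ^ (k' + 3) * ((d * b) * (e * e))) * d) := by noncomm_ring
      _ = b * (((a * c) ^ (k' + 3) * ((a * c) * (e * e))) * d) := by rw [hK1]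
      _ = b * (((a * c) ^ (k' + 3) * e) * d) := by rw [he2]
      _ = b * ((a * c) ^ (k' + 2) * d) := by rw [hek3]
    exact lhs.trans rhs.symm

theorem stmt_4 {R : Type*} [Ring R] (a b c d : R)
    (h1 : (a * c) ^ 2 = (d * b) * (a * c))
    (h2 : (d * b) ^ 2 = (a * c) * (d * b))
    (h3 : b * (a * c) * a = b * (d * b) * a)
    (h4 : c * (a * c) * d = c * (d * b) * d) :
    ((∃ e, IsDrazinInverse (a * c) e) ↔ (∃ f, IsDrazinInverse (b * d) f)) ∧
    (∀ e, ∀ k : ℕ, 1 ≤ k → IsDrazinInverse (a * c) e →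
      (a * c) ^ k = (a * c) ^ (k + 1) * e →
      IsDrazinInverse (b * d) (b * e ^ 2 * d) ∧
        (b * d) ^ (k + 2) = (b * d) ^ (k + 3) * (b * e ^ 2 * d)) := by
  constructor
  · constructor
    · rintro ⟨e, he⟩
      obtain ⟨he1, hecomm, k, hk, hek⟩ := he
      have hec : e * (a * c) = (a * c) * e := hecomm (a * c) rfl
      obtain ⟨q1, q2, q3⟩ := fwd_eqs a b c d h1 h2 h4 e k hk he1 hec hek
      exact ⟨_, drazin_of_commute _ _ (k + 2) (by omega) q1 q2 q3⟩
    · rintro ⟨f, hf⟩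
      have hdb : IsDrazinInverse (d * b) (d * f ^ 2 * b) := cline b d f hf
      obtain ⟨hg1, hgcomm, k, hk, hgk⟩ := hdb
      have hgc : (d * f ^ 2 * b) * (d * b) = (d * b) * (d * f ^ 2 * b) :=
        hgcomm (d * b) rfl
      obtain ⟨q1, q2, q3⟩ := fwd_eqs d c b a h2 h1 h3.symm (d * f ^ 2 * b) k hk hg1 hgc hgk
      have hca : IsDrazinInverse (c * a) (c * (d * f ^ 2 * b) ^ 2 * a) :=
        drazin_of_commute _ _ (k + 2) (by omega) q1 q2 q3
      exact ⟨_, cline c a _ hca⟩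
  · intro e k hk he hek
    obtain ⟨he1, hecomm, _⟩ := he
    have hec : e * (a * c) = (a * c) * e := hecomm (a * c) rfl
    obtain ⟨q1, q2, q3⟩ := fwd_eqs a b c d h1 h2 h4 e k hk he1 hec hek
    exact ⟨drazin_of_commute _ _ (k + 2) (by omega) q1 q2 q3, q3⟩
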